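/- For all natural numbers m and n, the Gram coefficients satisfy the skew-symmetry relation √(m+1) · a_{m+1, n} + √(n+1) · a_{m, n+1} = 0. (This is the entrywise content of the identity A·D + Dᵀ·A = 0 between the infinite Gram matrix A = (a_{m,n}) and the infinite transport matrix D with entries d_{m,n} = −e·√(2m/T)·δ_{m−1,n}.) -/

import Mathlib

open Real MeasureTheory Matrix Filter

/-- Physicists' Hermite polynomials: H_0 = 1, H_1 = 2x, H_{n+1} = 2x H_n - 2n H_{n-1}. -/
noncomputable def hermiteH : ℕ → ℝ → ℝ
  | 0, _ => 1
  | 1, x => 2 * x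
  | (n + 2), x => 2 * x * hermiteH (n + 1) x - 2 * (n + 1) * hermiteH n x

/-- Asymmetric Hermite basis function ψ_m. -/
noncomputable def psi (T : ℝ) (m : ℕ) (v : ℝ) : ℝ :=
  Real.exp (-v ^ 2 / T) * T ^ (-(1 : ℝ) / 2) *
    ((2 : ℝ) ^ m * (Nat.factorial m : ℝ) * Real.sqrt π) ^ (-(1 : ℝ) / 2) *
    hermiteH m (v / Real.sqrt T)

/-- Gram coefficient a_{m,n} = ∫ ψ_m ψ_n. -/
noncomputable def gramA (T : ℝ) (m n : ℕ) : ℝ := ∫ v : ℝ, psi T m v * psi T n v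

namespace GramAux

open Polynomial

noncomputable def Hp : ℕ → Polynomial ℝ
  | 0 => 1
  | 1 => Polynomial.C 2 * X
  | (n + 2) => Polynomial.C 2 * X * Hp (n + 1) - Polynomial.C ((2 : ℝ) * (n + 1)) * Hp n

lemma Hp_succ_succ (n : ℕ) :
    Hp (n + 2) = Polynomial.C 2 * X * Hp (n + 1) - Polynomial.C ((2 : ℝ) * (n + 1)) * Hp n := by
  rfl

lemma Hp_deriv : ∀ n : ℕ, derivative (Hp (n + 1)) = Polynomial.C (2 * ((n : ℝ) + 1)) * Hp n
  | 0 => by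
      show derivative (Polynomial.C 2 * X) = _
      simp [Hp]
  | 1 => by
      rw [Hp_succ_succ 0]
      show derivative _ = Polynomial.C (2 * ((1:ℕ) + (1:ℝ))) * Hp 1
      show derivative _ = Polynomial.C (2 * ((1:ℕ) + (1:ℝ))) * (Polynomial.C 2 * X)
      have h0 : Hp 0 = 1 := rfl
      have h1 : Hp 1 = Polynomial.C 2 * X := rfl
      simp only [h0, h1, derivative_sub, derivative_mul, derivative_C, derivative_X,
        derivative_one]
      push_cast
      simp only [map_add (f := Polynomial.C (R := ℝ)), _root_.map_mul, map_ofNat,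
        _root_.map_one, Polynomial.C_1]
      ring
  | (n + 2) => by
      rw [Hp_succ_succ (n + 1)]
      simp only [derivative_sub, derivative_mul, derivative_C, derivative_X,
        Hp_deriv (n + 1), Hp_deriv n]
      rw [Hp_succ_succ n]
      push_cast
      simp only [map_add (f := Polynomial.C (R := ℝ)), _root_.map_mul, map_ofNat,
        _root_.map_one, Polynomial.C_eq_natCast]
      ring

lemma Hp_succ_eq (n : ℕ) :
    Hp (n + 1) = Polynomial.C 2 * X * Hp n - derivative (Hp n) := by
  cases n with
  | zero =>
      show Hp 1 = _
      have h0 : Hp 0 = 1 := rfl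
      have h1 : Hp 1 = Polynomial.C 2 * X := rfl
      simp [h0, h1]
  | succ k => rw [Hp_succ_succ k, Hp_deriv k]

lemma hermiteH_eq : ∀ (n : ℕ) (x : ℝ), hermiteH n x = (Hp n).eval x
  | 0, x => by simp [hermiteH, Hp]
  | 1, x => by simp [hermiteH, Hp]
  | (n + 2), x => by
      have h : hermiteH (n + 2) x = 2 * x * hermiteH (n + 1) x - 2 * (n + 1) * hermiteH n x := rfl
      rw [h, hermiteH_eq (n + 1), hermiteH_eq n, Hp_succ_succ n]
      simp only [eval_sub, eval_mul, eval_C, eval_X]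

lemma integrable_gauss_poly {b : ℝ} (hb : 0 < b) (p : Polynomial ℝ) :
    Integrable fun v : ℝ => Real.exp (-b * v ^ 2) * p.eval v := by
  induction p using Polynomial.induction_on' with
  | add p q hp hq =>
      simpa [eval_add, mul_add, Pi.add_def] using hp.add hq
  | monomial n a =>
      have h : Integrable fun v : ℝ => a * (v ^ (n : ℝ) * Real.exp (-b * v ^ 2)) :=
        (integrable_rpow_mul_exp_neg_mul_sq hb
          (by exact_mod_cast lt_of_lt_of_le neg_one_lt_zero (Nat.cast_nonneg n))).const_mul a
      refine h.congr (Filter.Eventually.of_forall fun v => ?_)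
      simp only [eval_monomial, Real.rpow_natCast]
      ring

lemma tendsto_gauss_poly_atTop {b : ℝ} (hb : 0 < b) (p : Polynomial ℝ) :
    Tendsto (fun v : ℝ => Real.exp (-b * v ^ 2) * p.eval v) atTop (nhds 0) := by
  induction p using Polynomial.induction_on' with
  | add p q hp hq =>
      simpa [eval_add, mul_add] using hp.add hq
  | monomial n a =>
      have hlo := (rpow_mul_exp_neg_mul_sq_isLittleO_exp_neg hb (n : ℝ)).tendsto_zero_of_tendsto
        (Real.tendsto_exp_atBot.comp
          (tendsto_id.const_mul_atTop_of_neg (by norm_num : (-((1:ℝ)/2)) < 0)))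
      have h2 := hlo.const_mul a
      rw [mul_zero] at h2
      refine h2.congr fun v => ?_
      simp only [eval_monomial, Real.rpow_natCast]
      ring

lemma tendsto_gauss_poly_atBot {b : ℝ} (hb : 0 < b) (p : Polynomial ℝ) :
    Tendsto (fun v : ℝ => Real.exp (-b * v ^ 2) * p.eval v) atBot (nhds 0) := by
  have h := (tendsto_gauss_poly_atTop hb (p.comp (-X))).comp tendsto_neg_atBot_atTop
  refine h.congr fun v => ?_
  simp [Function.comp, eval_comp]

lemma integral_deriv_eq_zero (f f' : ℝ → ℝ) (hd : ∀ x, HasDerivAt f (f' x) x)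
    (hi : Integrable f') (ht : Tendsto f atTop (nhds 0)) (hb : Tendsto f atBot (nhds 0)) :
    ∫ x, f' x = 0 := by
  have h1 : ∫ x in Set.Ioi (0:ℝ), f' x = 0 - f 0 :=
    MeasureTheory.integral_Ioi_of_hasDerivAt_of_tendsto
      (hd 0).continuousAt.continuousWithinAt (fun x _ => hd x) hi.integrableOn ht
  have h2 : ∫ x in Set.Iic (0:ℝ), f' x = f 0 - 0 :=
    MeasureTheory.integral_Iic_of_hasDerivAt_of_tendsto
      (hd 0).continuousAt.continuousWithinAt (fun x _ => hd x) hi.integrableOn hb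
  rw [← intervalIntegral.integral_Iic_add_Ioi hi.integrableOn hi.integrableOn, h1, h2]
  ring

end GramAux

theorem gramA_skew_relation (T : ℝ) (hT : 0 < T) (m n : ℕ) :
    Real.sqrt ((m : ℝ) + 1) * gramA T (m + 1) n +
      Real.sqrt ((n : ℝ) + 1) * gramA T m (n + 1) = 0 := by
  classical
  open Polynomial GramAux in
  set s : ℝ := Real.sqrt T with hs
  have hs0 : 0 < s := Real.sqrt_pos.mpr hT
  have hss : s * s = T := Real.mul_self_sqrt hT.le
  have hb : (0:ℝ) < 2 / T := by positivity
  have hcomp : ∀ (q : Polynomial ℝ) (v : ℝ),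
      (q.comp (Polynomial.C s⁻¹ * X)).eval v = q.eval (v / s) := by
    intro q v
    simp [eval_comp, div_eq_inv_mul]
  set c : ℕ → ℝ := fun k => ((2 : ℝ) ^ k * (Nat.factorial k : ℝ) * Real.sqrt π) ^ (-(1 : ℝ) / 2)
    with hc
  set I : ℕ → ℕ → ℝ := fun a b' => ∫ v : ℝ,
      Real.exp (-(2 / T) * v ^ 2) * (Hp a * Hp b').eval (v / s) with hI
  -- gramA in terms of I
  have hgram : ∀ a b' : ℕ, gramA T a b' = T⁻¹ * c a * c b' * I a b' := by
    intro a b'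
    have hpt : ∀ v : ℝ, psi T a v * psi T b' v =
        T⁻¹ * c a * c b' * (Real.exp (-(2 / T) * v ^ 2) * (Hp a * Hp b').eval (v / s)) := by
      intro v
      have hexp : Real.exp (-v ^ 2 / T) * Real.exp (-v ^ 2 / T)
          = Real.exp (-(2 / T) * v ^ 2) := by
        rw [← Real.exp_add]; congr 1; field_simp; ring
      have hT2 : (T : ℝ) ^ (-(1 : ℝ) / 2) * T ^ (-(1 : ℝ) / 2) = T⁻¹ := by
        rw [← Real.rpow_add hT]
        norm_num [Real.rpow_neg_one]
      rw [psi, psi, hermiteH_eq, hermiteH_eq]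
      rw [eval_mul]
      calc Real.exp (-v ^ 2 / T) * T ^ (-(1:ℝ) / 2) * c a * (Hp a).eval (v / s) *
            (Real.exp (-v ^ 2 / T) * T ^ (-(1:ℝ) / 2) * c b' * (Hp b').eval (v / s))
          = (T ^ (-(1:ℝ) / 2) * T ^ (-(1:ℝ) / 2)) * c a * c b' *
            ((Real.exp (-v ^ 2 / T) * Real.exp (-v ^ 2 / T)) *
              ((Hp a).eval (v / s) * (Hp b').eval (v / s))) := by ring
        _ = _ := by rw [hexp, hT2]
    rw [gramA]
    simp_rw [hpt]
    rw [MeasureTheory.integral_const_mul]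
  -- integrability of gaussian times scaled polynomial
  have hint : ∀ q : Polynomial ℝ,
      Integrable fun v : ℝ => Real.exp (-(2 / T) * v ^ 2) * q.eval (v / s) := by
    intro q
    have h := integrable_gauss_poly hb (q.comp (Polynomial.C s⁻¹ * X))
    refine h.congr (Filter.Eventually.of_forall fun v => ?_)
    simp only [hcomp]
  -- key polynomial identity
  set S : Polynomial ℝ := Hp (m + 1) * Hp n + Hp m * Hp (n + 1) with hS
  have hpolyid : derivative (Hp m * Hp n) =
      Polynomial.C 2 * X * (Hp m * Hp n) + Polynomial.C 2 * X * (Hp m * Hp n) - S := by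
    have em : derivative (Hp m) = Polynomial.C 2 * X * Hp m - Hp (m + 1) := by
      rw [Hp_succ_eq m]; ring
    have en : derivative (Hp n) = Polynomial.C 2 * X * Hp n - Hp (n + 1) := by
      rw [Hp_succ_eq n]; ring
    rw [derivative_mul, em, en, hS]
    ring
  set G : ℝ → ℝ := fun v => Real.exp (-(2 / T) * v ^ 2) * (Hp m * Hp n).eval (v / s) with hG
  set G' : ℝ → ℝ := fun v =>
      Real.exp (-(2 / T) * v ^ 2) * (-s⁻¹ * S.eval (v / s)) with hG'
  have hderiv : ∀ v : ℝ, HasDerivAt G (G' v) v := by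
    intro v
    have h1 : HasDerivAt (fun v : ℝ => -(2 / T) * v ^ 2) (-(2 / T) * (2 * v ^ 1)) v := by
      simpa using (hasDerivAt_pow 2 v).const_mul (-(2 / T))
    have h2 := h1.exp
    have h3 : HasDerivAt (fun v : ℝ => (Hp m * Hp n).eval (v / s))
        ((derivative (Hp m * Hp n)).eval (v / s) * (1 / s)) v :=
      by have := HasDerivAt.comp v ((Hp m * Hp n).hasDerivAt (v / s)) ((hasDerivAt_id v).div_const s); exact this
    have h4 := h2.mul h3
    refine h4.congr_deriv ?_
    rw [hG', hpolyid]
    simp only [eval_sub, eval_add, eval_mul, eval_C, eval_X, pow_one]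
    rw [← hss]
    field_simp
    ring
  have hiG' : Integrable G' := by
    have h := (hint S).const_mul (-s⁻¹)
    refine h.congr (Filter.Eventually.of_forall fun v => ?_)
    rw [hG']
    ring
  have htop : Tendsto G atTop (nhds 0) := by
    have h := tendsto_gauss_poly_atTop hb ((Hp m * Hp n).comp (Polynomial.C s⁻¹ * X))
    refine h.congr fun v => ?_
    simp only [hcomp, hG]
  have hbot : Tendsto G atBot (nhds 0) := by
    have h := tendsto_gauss_poly_atBot hb ((Hp m * Hp n).comp (Polynomial.C s⁻¹ * X))
    refine h.congr fun v => ?_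
    simp only [hcomp, hG]
  have hzero : ∫ v : ℝ, G' v = 0 := integral_deriv_eq_zero G G' hderiv hiG' htop hbot
  -- conclude I (m+1) n + I m (n+1) = 0
  have hsum : I (m + 1) n + I m (n + 1) = 0 := by
    have h1 : ∫ v : ℝ, G' v = -s⁻¹ * (I (m + 1) n + I m (n + 1)) := by
      have e1 : ∀ v : ℝ, G' v =
          -s⁻¹ * (Real.exp (-(2 / T) * v ^ 2) * (Hp (m + 1) * Hp n).eval (v / s)
            + Real.exp (-(2 / T) * v ^ 2) * (Hp m * Hp (n + 1)).eval (v / s)) := by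
        intro v
        rw [hG', hS]
        simp only [eval_add]
        ring
      rw [show (∫ v : ℝ, G' v) = ∫ v : ℝ,
          -s⁻¹ * (Real.exp (-(2 / T) * v ^ 2) * (Hp (m + 1) * Hp n).eval (v / s)
            + Real.exp (-(2 / T) * v ^ 2) * (Hp m * Hp (n + 1)).eval (v / s)) from by
        exact MeasureTheory.integral_congr_ae (Filter.Eventually.of_forall e1)]
      rw [MeasureTheory.integral_const_mul]
      congr 1
      rw [hI]
      exact MeasureTheory.integral_add (hint _) (hint _)
    rw [h1] at hzero
    have hs' : -s⁻¹ ≠ 0 := by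
      simp [hs0.ne']
    exact (mul_eq_zero.mp hzero).resolve_left hs'
  -- coefficient identity
  have hcoef : ∀ k : ℕ, Real.sqrt ((k : ℝ) + 1) * c (k + 1) = (Real.sqrt 2)⁻¹ * c k := by
    intro k
    have hpi : (0:ℝ) < Real.sqrt π := Real.sqrt_pos.mpr Real.pi_pos
    have hA : (0:ℝ) < 2 ^ k * (Nat.factorial k : ℝ) * Real.sqrt π := by positivity
    have hk : (0:ℝ) < (k : ℝ) + 1 := by positivity
    have hfact : ((2:ℝ) ^ (k + 1) * ((Nat.factorial (k + 1)) : ℝ) * Real.sqrt π)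
        = (2 * ((k:ℝ) + 1)) * (2 ^ k * (Nat.factorial k : ℝ) * Real.sqrt π) := by
      push_cast [Nat.factorial_succ]
      ring
    rw [hc]
    show Real.sqrt ((k : ℝ) + 1) *
        ((2:ℝ) ^ (k+1) * ((Nat.factorial (k+1)) : ℝ) * Real.sqrt π) ^ (-(1:ℝ)/2)
        = (Real.sqrt 2)⁻¹ * ((2:ℝ) ^ k * ((Nat.factorial k) : ℝ) * Real.sqrt π) ^ (-(1:ℝ)/2)
    rw [hfact, Real.mul_rpow (by positivity) hA.le,
      Real.mul_rpow (by norm_num) hk.le, Real.sqrt_eq_rpow]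
    have h1 : ((k:ℝ) + 1) ^ ((1:ℝ)/2) * ((k:ℝ) + 1) ^ (-(1:ℝ)/2) = 1 := by
      rw [← Real.rpow_add hk]
      norm_num
    have h2 : ((2:ℝ)) ^ (-(1:ℝ)/2) = (Real.sqrt 2)⁻¹ := by
      rw [Real.sqrt_eq_rpow, show (-(1:ℝ)/2) = -((1:ℝ)/2) by norm_num,
        Real.rpow_neg (by norm_num : (0:ℝ) ≤ 2)]
    rw [h2]
    linear_combination ((Real.sqrt 2)⁻¹ *
      ((2:ℝ) ^ k * ((Nat.factorial k) : ℝ) * Real.sqrt π) ^ (-(1:ℝ)/2)) * h1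
  rw [hgram, hgram]
  linear_combination (T⁻¹ * c n * I (m + 1) n) * hcoef m
    + (T⁻¹ * c m * I m (n + 1)) * hcoef n
    + (T⁻¹ * (Real.sqrt 2)⁻¹ * c m * c n) * hsum
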